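/- The subspaces V = {M : (I_n - J̄_n)M = 0} and V^⊥ = {M : J̄_n M = 0} of ℝ^{n×m} are both invariant under the linear map A^S(M) = M(I_m - α D^S) + (α/k)(J̄_n - I_n) M δ^S (δ^S)^⊤; moreover A^S(M) = M(I_m - α D^S) for M ∈ V, and A^S(M') = M' Q^S for M' ∈ V^⊥, where Q^S = I_m - α D^S - (α/k) δ^S (δ^S)^⊤. -/
import Mathlib


open Matrix BigOperators

/-- The matrix `J̄_n = (1/n) J_n`, where `J_n` is the all-ones matrix. -/
noncomputable def Jbar (n : ℕ) : Matrix (Fin n) (Fin n) ℝ :=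
  ((n : ℝ))⁻¹ • Matrix.of fun _ _ => (1 : ℝ)

/-- Indicator column vector of `S ⊆ [m]`. -/
def dvec {m : ℕ} (S : Finset (Fin m)) : Matrix (Fin m) (Fin 1) ℝ :=
  Matrix.of fun j _ => if j ∈ S then 1 else 0

/-- Diagonal 0/1 matrix indicating `S ⊆ [m]`. -/
def Dmat {m : ℕ} (S : Finset (Fin m)) : Matrix (Fin m) (Fin m) ℝ :=
  Matrix.diagonal fun j => if j ∈ S then 1 else 0

/-- The matrix `Q^S = I_m - α D^S - (α/k) δ^S (δ^S)ᵀ`. -/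
noncomputable def Qmat {m : ℕ} (S : Finset (Fin m)) (α : ℝ) (k : ℕ) :
    Matrix (Fin m) (Fin m) ℝ :=
  1 - α • Dmat S - (α / (k : ℝ)) • (dvec S * (dvec S)ᵀ)

/-- The linear map `A^S(M) = M(I_m - α D^S) + (α/k)(J̄_n - I_n) M δ^S (δ^S)ᵀ`. -/
noncomputable def Amap {n m : ℕ} (S : Finset (Fin m)) (α : ℝ) (k : ℕ)
    (M : Matrix (Fin n) (Fin m) ℝ) : Matrix (Fin n) (Fin m) ℝ :=
  M * (1 - α • Dmat S) + (α / (k : ℝ)) • ((Jbar n - 1) * M * (dvec S * (dvec S)ᵀ))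

theorem stmt_4 (n m k : ℕ) (hn : 0 < n) (hk : 0 < k) (α : ℝ)
    (S : Finset (Fin m)) (hS : S.card = k) :
    (∀ M : Matrix (Fin n) (Fin m) ℝ, (1 - Jbar n) * M = 0 →
        Amap S α k M = M * (1 - α • Dmat S) ∧ (1 - Jbar n) * Amap S α k M = 0) ∧
    (∀ M' : Matrix (Fin n) (Fin m) ℝ, Jbar n * M' = 0 →
        Amap S α k M' = M' * Qmat S α k ∧ Jbar n * Amap S α k M' = 0) := by
  constructor
  · intro M hM
    have h1 : (Jbar n - 1) * M = 0 := by
      rw [← neg_sub (1 : Matrix (Fin n) (Fin n) ℝ), Matrix.neg_mul, hM, neg_zero]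
    have hA : Amap S α k M = M * (1 - α • Dmat S) := by
      unfold Amap
      rw [h1, Matrix.zero_mul, smul_zero, add_zero]
    refine ⟨hA, ?_⟩
    rw [hA, ← Matrix.mul_assoc, hM, Matrix.zero_mul]
  · intro M' hM'
    have h2 : (Jbar n - 1) * M' = -M' := by
      rw [Matrix.sub_mul, hM', Matrix.one_mul, zero_sub]
    have hA : Amap S α k M' = M' * Qmat S α k := by
      unfold Amap Qmat
      rw [h2]
      rw [Matrix.mul_sub, Matrix.mul_sub, Matrix.mul_one, Matrix.mul_smul,
        Matrix.mul_smul, Matrix.neg_mul, smul_neg, Matrix.mul_sub, Matrix.mul_one,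
        Matrix.mul_smul]
      abel
    refine ⟨hA, ?_⟩
    unfold Amap
    rw [h2, Matrix.mul_add, ← Matrix.mul_assoc, hM', Matrix.zero_mul,
      Matrix.mul_smul, Matrix.neg_mul, Matrix.mul_neg, ← Matrix.mul_assoc,
      ← Matrix.mul_assoc, hM', Matrix.zero_mul, Matrix.zero_mul,
      neg_zero, smul_zero, add_zero]
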